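/- Let ν < κ be regular uncountable cardinals and assume cf(ν, γ) < κ for every γ with ν < γ < κ. Then there exist a sequence ⟨c_ξ : ξ < κ⟩ of elements of P_ν κ and a stationary set T ⊆ {γ < κ : cf γ = ν} such that for every γ ∈ T, the family {c_ξ : ξ < γ} is cofinal in (P_ν γ, ⊆). -/

import Mathlib

set_option autoImplicit false

open Cardinal Set

/-- `x` has cardinality `< c`. -/
def cardLT (x : Set Ordinal.{0}) (c : Cardinal.{0}) : Prop :=
  Cardinal.mk ↥x < Cardinal.lift.{1, 0} c

/-- `x` has cardinality `≤ c`. -/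
def cardLE (x : Set Ordinal.{0}) (c : Cardinal.{0}) : Prop :=
  Cardinal.mk ↥x ≤ Cardinal.lift.{1, 0} c

/-- `x` has cardinality `= c`. -/
def cardEQ (x : Set Ordinal.{0}) (c : Cardinal.{0}) : Prop :=
  Cardinal.mk ↥x = Cardinal.lift.{1, 0} c

/-- `P_κ Λ`: subsets of `{β | β < Λ}` of size `< κ`. -/
def pkl (κ : Cardinal.{0}) (Λ : Ordinal.{0}) : Set (Set Ordinal.{0}) :=
  {x | x ⊆ Set.Iio Λ ∧ cardLT x κ}

/-- `C` is club in the ground family `X`: cofinal in `(X, ⊆)` and closed under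
unions of `⊆`-increasing chains of length `< κ`. -/
def IsClubP (κ : Cardinal.{0}) (X C : Set (Set Ordinal.{0})) : Prop :=
  C ⊆ X ∧ (∀ x ∈ X, ∃ c ∈ C, x ⊆ c) ∧
  ∀ (δ : Ordinal.{0}) (f : Ordinal.{0} → Set Ordinal.{0}),
    δ ≠ 0 → δ < κ.ord →
    (∀ i j, i ≤ j → j < δ → f i ⊆ f j) →
    (∀ i < δ, f i ∈ C) →
    (⋃ i ∈ Set.Iio δ, f i) ∈ C

/-- `S` is stationary in the ground family `X`: `S ⊆ X` and `S` meets every club. -/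
def IsStatP (κ : Cardinal.{0}) (X S : Set (Set Ordinal.{0})) : Prop :=
  S ⊆ X ∧ ∀ C, IsClubP κ X C → (S ∩ C).Nonempty

/-- `C` is closed unbounded in the ordinal `κ`. -/
def IsClubIn (C : Set Ordinal.{0}) (κ : Ordinal.{0}) : Prop :=
  C ⊆ Set.Iio κ ∧ (∀ α < κ, ∃ β ∈ C, α ≤ β) ∧
  ∀ δ, δ ≠ 0 → δ < κ → (∀ α < δ, ∃ β ∈ C, α < β ∧ β < δ) → δ ∈ C

/-- `S` is stationary in the ordinal `κ`. -/
def IsStatIn (S : Set Ordinal.{0}) (κ : Ordinal.{0}) : Prop :=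
  S ⊆ Set.Iio κ ∧ ∀ C, IsClubIn C κ → (S ∩ C).Nonempty

/-- `C(f)`: the members of `P_κ Λ` closed under `f`. -/
def clubC (κ : Cardinal.{0}) (Λ : Ordinal.{0}) (f : Finset Ordinal.{0} → Set Ordinal.{0}) :
    Set (Set Ordinal.{0}) :=
  {x | x ∈ pkl κ Λ ∧ ∀ a : Finset Ordinal.{0}, ↑a ⊆ x → f a ⊆ x}

section MyAux


lemma ordLtAddOne (a : Ordinal.{0}) : a < a + 1 := by
  rw [Ordinal.add_one_eq_succ]; exact Order.lt_succ a

lemma ordAddOneLt {o a : Ordinal.{0}} (h : Order.IsSuccLimit o) (ha : a < o) : a + 1 < o := by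
  rw [Ordinal.add_one_eq_succ]; exact h.succ_lt ha

noncomputable def gseq (step : Ordinal.{0} → Ordinal.{0}) : Ordinal.{0} → Ordinal.{0}
  | α => step (⨆ ξ : Set.Iio α, gseq step ξ.1 + 1)
termination_by α => α
decreasing_by exact ξ.2

lemma gseq_eq (step : Ordinal.{0} → Ordinal.{0}) (α : Ordinal.{0}) :
    gseq step α = step (⨆ ξ : Set.Iio α, gseq step ξ.1 + 1) := by
  rw [gseq]

lemma auxSupIioLt {c δ : Ordinal.{0}} (hδ : δ.card < c.cof) {f : Ordinal.{0} → Ordinal.{0}}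
    (hf : ∀ ξ < δ, f ξ < c) : (⨆ ξ : Set.Iio δ, f ξ.1) < c := by
  let e := Ordinal.ToType.mk (o := δ)
  have hrange : Set.range (fun ξ : Set.Iio δ => f ξ.1)
      = Set.range (fun i : δ.ToType => f (e.symm i).1) := by
    ext a
    constructor
    · rintro ⟨ξ, rfl⟩; exact ⟨e ξ, by simp⟩
    · rintro ⟨i, rfl⟩; exact ⟨e.symm i, rfl⟩
  have h2 : (⨆ ξ : Set.Iio δ, f ξ.1) = ⨆ i : δ.ToType, f (e.symm i).1 :=
    congrArg sSup hrange
  rw [h2]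
  exact Ordinal.iSup_lt_ord (by rwa [Cardinal.mk_toType]) fun i => hf _ (e.symm i).2

lemma auxSSupLt {c : Ordinal.{0}} {x : Set Ordinal.{0}} [Small.{0} ↥x]
    (hc : 0 < c) (hx : ∀ a ∈ x, a < c)
    (hcard : Cardinal.mk ↥x < Cardinal.lift.{1, 0} c.cof) :
    sSup x < c := by
  rcases x.eq_empty_or_nonempty with rfl | hne
  · simpa [csSup_empty] using hc
  · let e := equivShrink ↥x
    have hrange : x = Set.range (fun i : Shrink ↥x => ((e.symm i : ↥x) : Ordinal)) := by
      ext a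
      constructor
      · intro ha; exact ⟨e ⟨a, ha⟩, by simp⟩
      · rintro ⟨i, rfl⟩; exact (e.symm i).2
    have h2 : sSup x = ⨆ i : Shrink ↥x, ((e.symm i : ↥x) : Ordinal) :=
      congrArg sSup hrange
    rw [h2]
    apply Ordinal.iSup_lt_ord ?_ fun i => hx _ (e.symm i).2
    have hl := Cardinal.lift_mk_shrink' ↥x
    rw [← Cardinal.lift_lt.{0, 1}]
    calc Cardinal.lift.{1,0} #(Shrink.{0} ↥x) = Cardinal.lift.{0} #↥x := hl
      _ = #↥x := Cardinal.lift_id'.{0,1} _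
      _ < Cardinal.lift.{1,0} c.cof := hcard

lemma auxCofEq {ν : Cardinal.{0}} (hν : ν.IsRegular) {g : Ordinal.{0} → Ordinal.{0}}
    (hmono : ∀ p q : Ordinal.{0}, p < q → g p < g q) :
    (⨆ ξ : Set.Iio ν.ord, g ξ.1).cof = ν := by
  set γ := ⨆ ξ : Set.Iio ν.ord, g ξ.1 with hγ
  have hlim : Order.IsSuccLimit (ν.ord) := Cardinal.isSuccLimit_ord hν.aleph0_le
  have hle : ∀ ξ, ξ < ν.ord → g ξ ≤ γ := fun ξ hξ =>
    Ordinal.le_iSup (fun ξ : Set.Iio ν.ord => g ξ.1) ⟨ξ, hξ⟩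
  have hlt : ∀ ξ, ξ < ν.ord → g ξ < γ := fun ξ hξ =>
    lt_of_lt_of_le (hmono ξ (ξ + 1) (ordLtAddOne ξ)) (hle _ (ordAddOneLt hlim hξ))
  apply le_antisymm
  · let e := Ordinal.ToType.mk (o := ν.ord)
    have hlsub : Ordinal.lsub (fun i : (ν.ord).ToType => g (e.symm i).1) = γ := by
      apply le_antisymm
      · rw [Ordinal.lsub_le_iff]
        intro i
        exact hlt _ (e.symm i).2
      · apply Ordinal.iSup_le
        intro ξ
        have h3 := Ordinal.lt_lsub (fun i : (ν.ord).ToType => g (e.symm i).1) (e ξ)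
        simp only [OrderIso.symm_apply_apply] at h3
        exact h3.le
    rw [← hlsub]
    exact (Ordinal.cof_lsub_le _).trans (by rw [Cardinal.mk_toType, Cardinal.card_ord])
  · by_contra hcon
    push_neg at hcon
    obtain ⟨ι, f, hlsub, hmk⟩ := Ordinal.exists_lsub_cof γ
    have hι : #ι < (ν.ord).cof := by rw [hν.cof_eq, hmk]; exact hcon
    have hfi : ∀ i, ∃ ξ : ↥(Set.Iio ν.ord), f i < g ξ.1 := by
      intro i
      have h4 : f i < γ := hlsub ▸ Ordinal.lt_lsub f i
      exact (Ordinal.lt_iSup_iff).1 h4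
    choose ξf hξf using hfi
    set ζ := ⨆ i, ((ξf i).1 + 1) with hζ
    have hζν : ζ < ν.ord :=
      Ordinal.iSup_lt_ord hι fun i => ordAddOneLt hlim (ξf i).2
    have hgζ : ∀ i, f i < g ζ := fun i =>
      (hξf i).trans (hmono _ _ (lt_of_lt_of_le (ordLtAddOne _)
        (Ordinal.le_iSup (fun i => (ξf i).1 + 1) i)))
    have h1 : γ ≤ g ζ + 1 := by
      rw [← hlsub, Ordinal.lsub_le_iff]
      exact fun i => (hgζ i).trans (ordLtAddOne _)
    have h5 : g (ζ + 1) < γ := hlt _ (ordAddOneLt hlim hζν)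
    have h6 : g ζ + 1 ≤ g (ζ + 1) := by
      rw [Ordinal.add_one_eq_succ, Order.succ_le_iff]
      exact hmono _ _ (ordLtAddOne ζ)
    exact absurd ((h6.trans_lt h5).trans_le h1) (lt_irrefl _)

end MyAux

/-- If `ν < κ` are regular uncountable and `cf(ν, γ) < κ` for all `ν < γ < κ`, then there
are `⟨c_ξ : ξ < κ⟩ ⊆ P_ν κ` and a stationary `T ⊆ S^ν_κ` such that for every `γ ∈ T`,
`{c_ξ : ξ < γ}` is cofinal in `(P_ν γ, ⊆)`. -/

theorem exists_cofinal_system (ν κ : Cardinal.{0})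
    (hν : ν.IsRegular) (hνu : Cardinal.aleph0 < ν)
    (hκ : κ.IsRegular) (hκu : Cardinal.aleph0 < κ) (hνκ : ν < κ)
    (hcf : ∀ γ : Ordinal.{0}, ν.ord < γ → γ < κ.ord →
      ∃ θ : Ordinal.{0}, θ < κ.ord ∧ ∃ d : Ordinal.{0} → Set Ordinal.{0},
        (∀ ξ < θ, d ξ ⊆ Set.Iio γ ∧ cardLT (d ξ) ν) ∧
        ∀ x : Set Ordinal.{0}, x ⊆ Set.Iio γ → cardLT x ν → ∃ ξ < θ, x ⊆ d ξ) :
    ∃ c : Ordinal.{0} → Set Ordinal.{0},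
      (∀ ξ < κ.ord, c ξ ⊆ Set.Iio κ.ord ∧ cardLT (c ξ) ν) ∧
      ∃ T : Set Ordinal.{0}, T ⊆ {γ | γ.cof = ν} ∧ IsStatIn T κ.ord ∧
        ∀ γ ∈ T, ∀ x : Set Ordinal.{0}, x ⊆ Set.Iio γ → cardLT x ν →
          ∃ ξ < γ, x ⊆ c ξ := by
  classical
  have hκlim : Order.IsSuccLimit κ.ord := Cardinal.isSuccLimit_ord hκ.aleph0_le
  have hνlim : Order.IsSuccLimit ν.ord := Cardinal.isSuccLimit_ord hν.aleph0_le
  have hνκord : ν.ord < κ.ord := Cardinal.ord_lt_ord.2 hνκ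
  -- choose the local cofinal families
  have hcf' : ∀ γ : Ordinal.{0}, ∃ (θ : Ordinal.{0}) (d : Ordinal.{0} → Set Ordinal.{0}),
      θ < κ.ord ∧ ((ν.ord < γ ∧ γ < κ.ord) →
        ((∀ ξ < θ, d ξ ⊆ Set.Iio γ ∧ cardLT (d ξ) ν) ∧
         ∀ x : Set Ordinal.{0}, x ⊆ Set.Iio γ → cardLT x ν → ∃ ξ < θ, x ⊆ d ξ)) := by
    intro γ
    by_cases hγ : ν.ord < γ ∧ γ < κ.ord
    · obtain ⟨θ, hθ, d, h1, h2⟩ := hcf γ hγ.1 hγ.2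
      exact ⟨θ, d, hθ, fun _ => ⟨h1, h2⟩⟩
    · exact ⟨0, fun _ => ∅, hκlim.pos, fun h => absurd h hγ⟩
  choose θ d hθκ hθd using hcf'
  -- a pairing bijection
  have hmkIio : #(↥(Set.Iio κ.ord)) = Cardinal.lift.{1, 0} κ := by
    rw [Ordinal.mk_Iio_ordinal, Cardinal.card_ord]
  obtain ⟨E⟩ : Nonempty ((↥(Set.Iio κ.ord) × ↥(Set.Iio κ.ord)) ≃ ↥(Set.Iio κ.ord)) := by
    apply Cardinal.eq.1
    rw [Cardinal.mk_prod]
    simp only [Cardinal.lift_id]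
    rw [hmkIio, ← Cardinal.lift_mul, Cardinal.mul_eq_self hκ.aleph0_le]
  set code : Ordinal.{0} → Ordinal.{0} → Ordinal.{0} := fun β ξ =>
    if h : β < κ.ord ∧ ξ < κ.ord then (E (⟨β, h.1⟩, ⟨ξ, h.2⟩) : Ordinal) else 0 with hcode_def
  have hcodeκ : ∀ β ξ, code β ξ < κ.ord := by
    intro β ξ
    rw [hcode_def]
    dsimp only
    split
    · exact (E _).2
    · exact hκlim.pos
  -- the system c
  set c : Ordinal.{0} → Set Ordinal.{0} := fun η =>
    if hη : η < κ.ord then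
      (fun p : ↥(Set.Iio κ.ord) × ↥(Set.Iio κ.ord) =>
        if ν.ord < (p.1 : Ordinal) ∧ (p.2 : Ordinal) < θ (p.1 : Ordinal) then
          d (p.1 : Ordinal) (p.2 : Ordinal) else ∅) (E.symm ⟨η, hη⟩)
    else ∅ with hc_def
  have hc_eval : ∀ β ξ (hβ : ν.ord < β) (hβκ : β < κ.ord) (hξ : ξ < θ β),
      c (code β ξ) = d β ξ := by
    intro β ξ hβ hβκ hξ
    have hξκ : ξ < κ.ord := hξ.trans (hθκ β)
    have hcd : code β ξ = (E (⟨β, hβκ⟩, ⟨ξ, hξκ⟩) : Ordinal) := by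
      rw [hcode_def]
      exact dif_pos ⟨hβκ, hξκ⟩
    rw [hc_def, hcd]
    dsimp only
    rw [dif_pos (show (E (⟨β, hβκ⟩, ⟨ξ, hξκ⟩) : Ordinal) < κ.ord from (E (⟨β, hβκ⟩, ⟨ξ, hξκ⟩)).2)]
    have hsy : E.symm ⟨(E (⟨β, hβκ⟩, ⟨ξ, hξκ⟩) : Ordinal), (E (⟨β, hβκ⟩, ⟨ξ, hξκ⟩)).2⟩
        = (⟨β, hβκ⟩, ⟨ξ, hξκ⟩) := by
      rw [Subtype.coe_eta, Equiv.symm_apply_apply]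
    rw [hsy, if_pos ⟨hβ, hξ⟩]
  have hc_bound : ∀ η, c η ⊆ Set.Iio κ.ord ∧ cardLT (c η) ν := by
    have hempty : (∅ : Set Ordinal.{0}) ⊆ Set.Iio κ.ord ∧ cardLT (∅ : Set Ordinal.{0}) ν := by
      refine ⟨Set.empty_subset _, ?_⟩
      rw [cardLT, Cardinal.mk_emptyCollection, pos_iff_ne_zero, Ne,
        Cardinal.lift_eq_zero]
      exact (Cardinal.aleph0_pos.trans hνu).ne'
    intro η
    rw [hc_def]
    dsimp only
    split
    · rename_i hη
      split
      · rename_i hp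
        set p := E.symm ⟨η, hη⟩
        have hd := (hθd (p.1 : Ordinal) ⟨hp.1, p.1.2⟩).1 (p.2 : Ordinal) hp.2
        exact ⟨hd.1.trans (Set.Iio_subset_Iio p.1.2.le), hd.2⟩
      · exact hempty
    · exact hempty
  -- the sup-closure function h
  set h : Ordinal.{0} → Ordinal.{0} := fun β =>
    if hβ : β < κ.ord then ⨆ ξ : Set.Iio (θ β), (code β ξ.1 + 1) else 0 with hh_def
  have hhκ : ∀ β, h β < κ.ord := by
    intro β
    rw [hh_def]
    dsimp only
    split
    · exact auxSupIioLt (by rw [hκ.cof_eq]; exact Cardinal.lt_ord.1 (hθκ β))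
        fun ξ _ => ordAddOneLt hκlim (hcodeκ β ξ)
    · exact hκlim.pos
  have hcode_lt_h : ∀ β ξ, β < κ.ord → ξ < θ β → code β ξ < h β := by
    intro β ξ hβ hξ
    rw [hh_def]
    dsimp only
    rw [dif_pos hβ]
    exact lt_of_lt_of_le (ordLtAddOne _)
      (Ordinal.le_iSup (fun ξ' : Set.Iio (θ β) => code β ξ'.1 + 1) ⟨ξ, hξ⟩)
  refine ⟨c, fun η _ => hc_bound η,
    {γ | γ.cof = ν ∧ ν.ord < γ ∧ γ < κ.ord ∧ ∀ β < γ, h β < γ},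
    fun γ hγ => hγ.1, ⟨fun γ hγ => hγ.2.2.1, ?_⟩, ?_⟩
  · -- stationarity
    intro C hC
    obtain ⟨hC1, hC2, hC3⟩ := hC
    set H : Ordinal.{0} → Ordinal.{0} := fun δ => ⨆ β : Set.Iio δ, (h β.1 + 1) with hH_def
    have hHκ : ∀ δ < κ.ord, H δ < κ.ord := fun δ hδ =>
      auxSupIioLt (by rw [hκ.cof_eq]; exact Cardinal.lt_ord.1 hδ)
        fun β _ => ordAddOneLt hκlim (hhκ β)
    have hH_mem : ∀ β δ, β < δ → h β < H δ := fun β δ hβδ =>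
      lt_of_lt_of_le (ordLtAddOne _)
        (Ordinal.le_iSup (fun β' : Set.Iio δ => h β'.1 + 1) ⟨β, hβδ⟩)
    have hstep : ∀ δ : Ordinal.{0}, ∃ β, δ < β ∧
        (δ < κ.ord → (β ∈ C ∧ H δ < β ∧ ν.ord < β)) := by
      intro δ
      by_cases hδ : δ < κ.ord
      · have hακ : max (max (δ + 1) (H δ + 1)) (ν.ord + 1) < κ.ord :=
          max_lt (max_lt (ordAddOneLt hκlim hδ) (ordAddOneLt hκlim (hHκ δ hδ)))
            (ordAddOneLt hκlim hνκord)
        obtain ⟨β, hβC, hαβ⟩ := hC2 _ hακ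
        refine ⟨β, ?_, fun _ => ⟨hβC, ?_, ?_⟩⟩
        · exact lt_of_lt_of_le (ordLtAddOne δ)
            (((le_max_left _ _).trans (le_max_left _ _)).trans hαβ)
        · exact lt_of_lt_of_le (ordLtAddOne _)
            (((le_max_right _ _).trans (le_max_left _ _)).trans hαβ)
        · exact lt_of_lt_of_le (ordLtAddOne _) ((le_max_right _ _).trans hαβ)
      · exact ⟨δ + 1, ordLtAddOne δ, fun hh => absurd hh hδ⟩
    choose step hstep1 hstep2 using hstep
    set g : Ordinal.{0} → Ordinal.{0} := gseq step with hg_def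
    set S : Ordinal.{0} → Ordinal.{0} := fun α => ⨆ ξ : Set.Iio α, g ξ.1 + 1 with hS_def
    have hgeq : ∀ α, g α = step (S α) := fun α => gseq_eq step α
    have hgmono : ∀ p q : Ordinal.{0}, p < q → g p < g q := by
      intro p q hpq
      have h1 : g p + 1 ≤ S q := Ordinal.le_iSup (fun ξ : Set.Iio q => g ξ.1 + 1) ⟨p, hpq⟩
      have h2 : S q < g q := by rw [hgeq q]; exact hstep1 _
      exact lt_of_lt_of_le (ordLtAddOne (g p)) (h1.trans h2.le)
    have key : ∀ α, α < ν.ord → S α < κ.ord := by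
      intro α
      induction α using Ordinal.induction with
      | _ α IH =>
        intro hα
        have hmain : (⨆ ξ : Set.Iio α, g ξ.1 + 1) < κ.ord := by
          apply auxSupIioLt (f := fun ξ => g ξ + 1)
            (by rw [hκ.cof_eq]; exact Cardinal.lt_ord.1 (hα.trans hνκord))
          intro ξ hξ
          apply ordAddOneLt hκlim
          have hgξ : g ξ ∈ C := by
            rw [hgeq ξ]
            exact (hstep2 _ (IH ξ hξ (hξ.trans hα))).1
          exact hC1 hgξ
        exact hmain
    have hgC : ∀ α < ν.ord, g α ∈ C := fun α hα => by
      rw [hgeq α]; exact (hstep2 _ (key α hα)).1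
    have hgκ : ∀ α < ν.ord, g α < κ.ord := fun α hα => hC1 (hgC α hα)
    have hgν : ∀ α < ν.ord, ν.ord < g α := fun α hα => by
      rw [hgeq α]; exact (hstep2 _ (key α hα)).2.2
    have hgH : ∀ α < ν.ord, H (S α) < g α := fun α hα => by
      rw [hgeq α]; exact (hstep2 _ (key α hα)).2.1
    set γ := ⨆ ξ : Set.Iio ν.ord, g ξ.1 with hγ_def
    have hgle : ∀ ξ, ξ < ν.ord → g ξ ≤ γ := fun ξ hξ =>
      Ordinal.le_iSup (fun ξ' : Set.Iio ν.ord => g ξ'.1) ⟨ξ, hξ⟩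
    have hglt : ∀ ξ, ξ < ν.ord → g ξ < γ := fun ξ hξ =>
      lt_of_lt_of_le (hgmono ξ (ξ + 1) (ordLtAddOne ξ)) (hgle _ (ordAddOneLt hνlim hξ))
    have hγκ : γ < κ.ord :=
      auxSupIioLt (by rw [hκ.cof_eq, Cardinal.card_ord]; exact hνκ) fun ξ hξ => hgκ ξ hξ
    have hγν : ν.ord < γ := lt_of_lt_of_le (hgν 0 hνlim.pos) (hgle 0 hνlim.pos)
    have hγ0 : γ ≠ 0 := (hνlim.pos.trans hγν).ne'
    have hcof : γ.cof = ν := auxCofEq hν hgmono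
    have hγcl : ∀ β < γ, h β < γ := by
      intro β hβ
      obtain ⟨⟨ξ, hξ⟩, hβξ⟩ := (Ordinal.lt_iSup_iff).1 hβ
      have h1 : β < S (ξ + 1) := by
        refine lt_of_lt_of_le (hβξ.trans (ordLtAddOne (g ξ))) ?_
        exact Ordinal.le_iSup (fun ξ' : Set.Iio (ξ + 1) => g ξ'.1 + 1) ⟨ξ, ordLtAddOne ξ⟩
      have hξ1 : ξ + 1 < ν.ord := ordAddOneLt hνlim hξ
      exact (hH_mem β _ h1).trans ((hgH _ hξ1).trans_le (hgle _ hξ1))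
    refine ⟨γ, ⟨hcof, hγν, hγκ, hγcl⟩, ?_⟩
    apply hC3 γ hγ0 hγκ
    intro α hα
    obtain ⟨⟨ξ, hξ⟩, hαξ⟩ := (Ordinal.lt_iSup_iff).1 hα
    exact ⟨g ξ, hgC ξ hξ, hαξ, hglt ξ hξ⟩
  · -- the covering property
    intro γ hγT x hxγ hxcard
    obtain ⟨hcof, hγν, hγκ, hγcl⟩ := hγT
    have hγlim : Order.IsSuccLimit γ := Ordinal.aleph0_le_cof.1 (by rw [hcof]; exact hν.aleph0_le)
    have hsmall : Small.{0} ↥x := small_subset hxγ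
    have hsup : sSup x < γ := by
      apply auxSSupLt hγlim.pos (fun a ha => hxγ ha)
      rw [hcof]
      exact hxcard
    have hβγ : max (sSup x + 1) (ν.ord + 1) < γ :=
      max_lt (ordAddOneLt hγlim hsup) (ordAddOneLt hγlim hγν)
    have hβν : ν.ord < max (sSup x + 1) (ν.ord + 1) :=
      lt_of_lt_of_le (ordLtAddOne ν.ord) (le_max_right _ _)
    have hβκ : max (sSup x + 1) (ν.ord + 1) < κ.ord := hβγ.trans hγκ
    have hxβ : x ⊆ Set.Iio (max (sSup x + 1) (ν.ord + 1)) := by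
      intro a ha
      have h1 : a ≤ sSup x := le_csSup ((Ordinal.bddAbove_of_small (s := x))) ha
      exact lt_of_le_of_lt h1 (lt_of_lt_of_le (ordLtAddOne _) (le_max_left _ _))
    obtain ⟨ξ, hξθ, hxd⟩ := (hθd _ ⟨hβν, hβκ⟩).2 x hxβ hxcard
    refine ⟨code (max (sSup x + 1) (ν.ord + 1)) ξ, ?_, ?_⟩
    · exact (hcode_lt_h _ ξ hβκ hξθ).trans (hγcl _ hβγ)
    · rw [hc_eval _ ξ hβν hβκ hξθ]
      exact hxd
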